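/- Let (M,μ) be a probability space and (τ_t)_{t∈ℝ} a jointly measurable, measure-preserving, ergodic group of transformations of M. Let f : [0,∞) × M → ℝ be bounded and measurable, and suppose that for μ-almost every m, f(y₂, m) → 0 as y₂ → ∞. Then for μ-almost every m ∈ M, lim_{ε→0⁺} sup_{R≥1} (ε²/R) ∫_{−R/ε}^{R/ε} ∫_0^{1/ε} f(y₂, τ_{y₁} m)² dy₂ dy₁ = 0. -/

import Mathlib

open MeasureTheory Real Set Filter symmDiff
open scoped ENNReal

noncomputable section

lemma hl_cover (W : Set ℝ) (hW : MeasurableSet W) (lam : ℝ) (hlam : 0 < lam)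
    (S : ℕ) (K : ℝ) (V : Set ℝ)
    (hV : ∀ t ∈ V ∩ Icc 0 K, ∃ n : ℕ, 1 ≤ n ∧ n ≤ S ∧
      ENNReal.ofReal (2 * n * lam) < volume (W ∩ Metric.closedBall t n)) :
    volume (V ∩ Icc 0 K) ≤ ENNReal.ofReal (4 / lam) * volume (W ∩ Icc (-(S : ℝ)) (K + S)) := by
  classical
  set t : Set ℝ := V ∩ Icc 0 K with ht
  choose! n hn1 hnS hnvol using hV
  set r : ℝ → ℝ := fun a => (n a : ℝ) with hr
  obtain ⟨u, hut, hdisj, hcov⟩ :=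
    Vitali.exists_disjoint_subfamily_covering_enlargement_closedBall t id r S
      (fun a _ => by simp only [hr]; exact_mod_cast hnS a ‹_›) 4 (by norm_num)
  have hr1 : ∀ a ∈ t, (1 : ℝ) ≤ r a := fun a ha => by
    simp only [hr]; exact_mod_cast hn1 a ha
  have hucnt : u.Countable := by
    apply hdisj.countable_of_nonempty_interior
    intro b hb
    refine ⟨b, ?_⟩
    rw [interior_closedBall]
    · exact Metric.mem_ball_self (by linarith [hr1 b (hut hb)])
    · exact (by linarith [hr1 b (hut hb)] : r b ≠ 0)
  have hballsub : ∀ b ∈ u, Metric.closedBall b (r b) ⊆ Icc (-(S : ℝ)) (K + S) := by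
    intro b hb x hx
    have hbm : (b : ℝ) ∈ Icc 0 K := (hut hb).2
    have hrS : r b ≤ S := by simp only [hr]; exact_mod_cast hnS b (hut hb)
    have habs := Metric.mem_closedBall.1 hx
    rw [Real.dist_eq] at habs
    have := abs_le.1 habs
    exact ⟨by linarith [hbm.1, this.1], by linarith [hbm.2, this.2]⟩
  have htsub : t ⊆ ⋃ b ∈ u, Metric.closedBall b (4 * r b) := by
    intro a ha
    obtain ⟨b, hbu, hsub⟩ := hcov a ha
    exact mem_biUnion hbu (hsub (Metric.mem_closedBall_self (by linarith [hr1 a ha])))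
  calc volume t ≤ volume (⋃ b ∈ u, Metric.closedBall b (4 * r b)) := measure_mono htsub
    _ ≤ ∑' b : u, volume (Metric.closedBall (b : ℝ) (4 * r b)) := measure_biUnion_le _ hucnt _
    _ ≤ ∑' b : u, ENNReal.ofReal (4 / lam) * volume (W ∩ Metric.closedBall (b : ℝ) (r b)) := by
        apply Summable.tsum_le_tsum _ ENNReal.summable ENNReal.summable
        intro b
        have hb := hut b.2
        have h1 : (1:ℝ) ≤ r b := hr1 b hb
        rw [Real.volume_closedBall]
        have heq : ENNReal.ofReal (2 * (4 * r (b:ℝ))) =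
            ENNReal.ofReal (4 / lam) * ENNReal.ofReal (2 * r (b:ℝ) * lam) := by
          rw [← ENNReal.ofReal_mul (by positivity)]
          congr 1
          field_simp
        rw [heq]
        exact mul_le_mul_right (hnvol b hb).le _
    _ = ENNReal.ofReal (4 / lam) * ∑' b : u, volume (W ∩ Metric.closedBall (b : ℝ) (r b)) :=
        ENNReal.tsum_mul_left
    _ ≤ ENNReal.ofReal (4 / lam) * volume (W ∩ Icc (-(S : ℝ)) (K + S)) := by
        apply mul_le_mul_right
        have hdisj' : u.PairwiseDisjoint fun b => W ∩ Metric.closedBall b (r b) :=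
          Set.PairwiseDisjoint.mono hdisj (fun b => inter_subset_right)
        calc ∑' b : u, volume (W ∩ Metric.closedBall (b : ℝ) (r b))
            = volume (⋃ b ∈ u, W ∩ Metric.closedBall b (r b)) :=
              (measure_biUnion hucnt hdisj' (fun b _ => hW.inter measurableSet_closedBall)).symm
          _ ≤ volume (W ∩ Icc (-(S : ℝ)) (K + S)) := by
              apply measure_mono
              apply iUnion₂_subset
              intro b hb
              exact inter_subset_inter_right W (hballsub b hb)

lemma flow_maximal {M : Type*} [MeasurableSpace M] (μ : Measure M) [IsProbabilityMeasure μ]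
    (τ : ℝ → M → M) (hjm : Measurable fun p : ℝ × M => τ p.1 p.2)
    (hgrp : ∀ s t : ℝ, ∀ m, τ (s + t) m = τ s (τ t m))
    (hpres : ∀ t : ℝ, MeasurePreserving (τ t) μ μ)
    (E : Set M) (hE : MeasurableSet E) (lam : ℝ) (hlam : 0 < lam) :
    μ {m | ∃ n : ℕ, 1 ≤ n ∧ ENNReal.ofReal (2 * n * lam) <
        volume ({s : ℝ | τ s m ∈ E} ∩ Metric.closedBall 0 n)} ≤
      ENNReal.ofReal (4 / lam) * μ E := by
  classical
  have hτm : ∀ t : ℝ, Measurable (τ t) := fun t =>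
    hjm.comp (measurable_const.prodMk measurable_id)
  have horb : ∀ m : M, Measurable fun s : ℝ => τ s m := fun m =>
    hjm.comp (measurable_id.prodMk measurable_const)
  have hWmeas : ∀ m, MeasurableSet {s : ℝ | τ s m ∈ E} := fun m => (horb m) hE
  -- the jointly measurable indicator
  set g : ℝ × M → ℝ≥0∞ := fun p => E.indicator (fun _ => (1:ℝ≥0∞)) (τ p.1 p.2) with hg
  have hgmeas : Measurable g := by
    have : g = ((fun p : ℝ × M => τ p.1 p.2) ⁻¹' E).indicator (fun _ => (1:ℝ≥0∞)) := by
      funext p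
      by_cases h : τ p.1 p.2 ∈ E <;> simp [hg, Set.indicator, h]
    rw [this]
    exact measurable_const.indicator (hjm hE)
  -- volume of orbit visits as a lintegral
  have key : ∀ (m : M) (B : Set ℝ), MeasurableSet B →
      volume ({s : ℝ | τ s m ∈ E} ∩ B) = ∫⁻ s in B, g (s, m) := by
    intro m B hB
    have h2 : (fun s : ℝ => g (s, m)) = {s : ℝ | τ s m ∈ E}.indicator (fun _ => (1:ℝ≥0∞)) := by
      funext s
      by_cases h : τ s m ∈ E <;> simp [hg, Set.indicator, h]
    rw [← Measure.restrict_apply (hWmeas m), ← lintegral_indicator_one (hWmeas m)]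
    exact lintegral_congr fun s => (congrFun h2 s).symm
  -- ψ n measurable
  have hpsi : ∀ n : ℕ, Measurable fun m =>
      volume ({s : ℝ | τ s m ∈ E} ∩ Metric.closedBall (0:ℝ) n) := by
    intro n
    have : (fun m => volume ({s : ℝ | τ s m ∈ E} ∩ Metric.closedBall (0:ℝ) n))
        = fun m => ∫⁻ s in Metric.closedBall (0:ℝ) n, (fun p : M × ℝ => g (p.2, p.1)) (m, s) := by
      funext m; exact key m _ Metric.isClosed_closedBall.measurableSet
    rw [this]
    exact Measurable.lintegral_prod_right' (hgmeas.comp measurable_swap)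
  -- the bad sets
  set Bad : ℕ → Set M := fun S => {m | ∃ n : ℕ, 1 ≤ n ∧ n ≤ S ∧ ENNReal.ofReal (2 * n * lam) <
      volume ({s : ℝ | τ s m ∈ E} ∩ Metric.closedBall 0 n)} with hBad
  have hBadMeas : ∀ S, MeasurableSet (Bad S) := by
    intro S
    have : Bad S = ⋃ n ∈ Finset.Icc 1 S, {m | ENNReal.ofReal (2 * n * lam) <
        volume ({s : ℝ | τ s m ∈ E} ∩ Metric.closedBall 0 n)} := by
      ext m
      simp only [hBad, mem_setOf_eq, mem_iUnion, Finset.mem_Icc]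
      constructor
      · rintro ⟨n, h1, h2, h3⟩; exact ⟨n, ⟨h1, h2⟩, h3⟩
      · rintro ⟨n, ⟨h1, h2⟩, h3⟩; exact ⟨n, h1, h2, h3⟩
    rw [this]
    exact MeasurableSet.biUnion (Finset.Icc 1 S).countable_toSet
      (fun n _ => measurableSet_lt measurable_const (hpsi n))
  -- key step: μ (Bad S) ≤ (4/lam) μ E
  have hmain : ∀ S : ℕ, μ (Bad S) ≤ ENNReal.ofReal (4 / lam) * μ E := by
    intro S
    -- for each K : ℕ, 1 ≤ K
    have hK : ∀ K : ℕ, ENNReal.ofReal (K : ℝ) * μ (Bad S) ≤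
        ENNReal.ofReal (4 / lam) * (ENNReal.ofReal ((K : ℝ) + 2 * S) * μ E) := by
      intro K
      -- pointwise covering bound
      have hpt : ∀ m : M, volume ({t : ℝ | τ t m ∈ Bad S} ∩ Icc 0 (K : ℝ)) ≤
          ENNReal.ofReal (4 / lam) *
            volume ({s : ℝ | τ s m ∈ E} ∩ Icc (-(S : ℝ)) ((K : ℝ) + S)) := by
        intro m
        apply hl_cover _ (hWmeas m) lam hlam S
        rintro t ⟨htV, htI⟩
        obtain ⟨n, hn1, hnS, hnvol⟩ := htV
        refine ⟨n, hn1, hnS, ?_⟩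
        have hshift : {s : ℝ | τ s (τ t m) ∈ E} = (fun s : ℝ => s + t) ⁻¹' {s : ℝ | τ s m ∈ E} := by
          ext s
          simp only [mem_preimage, mem_setOf_eq, ← hgrp s t m]
        have hball : (fun s : ℝ => s + t) ⁻¹' Metric.closedBall t n = Metric.closedBall 0 n := by
          ext s
          simp [Metric.mem_closedBall, Real.dist_eq, abs_sub_comm]
        have hvol : volume ({s : ℝ | τ s m ∈ E} ∩ Metric.closedBall t n)
            = volume ({s : ℝ | τ s (τ t m) ∈ E} ∩ Metric.closedBall (0:ℝ) n) := by
          rw [hshift, ← hball, ← preimage_inter,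
            (measurePreserving_add_right volume t).measure_preimage
              ((hWmeas m).inter Metric.isClosed_closedBall.measurableSet).nullMeasurableSet]
        rw [hvol]
        exact hnvol
      -- Fubini on both sides
      have hfub : ∀ (A : Set M), MeasurableSet A → ∀ (B : Set ℝ), MeasurableSet B →
          ∫⁻ m, volume ({t : ℝ | τ t m ∈ A} ∩ B) ∂μ = volume B * μ A := by
        intro A hA B hB
        have h2 : ∀ m, volume ({t : ℝ | τ t m ∈ A} ∩ B)
            = ∫⁻ t in B, A.indicator (fun _ => (1:ℝ≥0∞)) (τ t m) := by
          intro m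
          have h3 : (fun t : ℝ => A.indicator (fun _ => (1:ℝ≥0∞)) (τ t m))
              = {t : ℝ | τ t m ∈ A}.indicator (fun _ => (1:ℝ≥0∞)) := by
            funext t
            by_cases h : τ t m ∈ A <;> simp [Set.indicator, h]
          have hWA : MeasurableSet {t : ℝ | τ t m ∈ A} := (horb m) hA
          rw [← Measure.restrict_apply hWA, ← lintegral_indicator_one hWA]
          exact lintegral_congr fun t => (congrFun h3 t).symm
        simp_rw [h2]
        rw [lintegral_lintegral_swap]
        · have h4 : ∀ t : ℝ, ∫⁻ m, A.indicator (fun _ => (1:ℝ≥0∞)) (τ t m) ∂μ = μ A := by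
            intro t
            rw [lintegral_indicator_const_comp (hτm t) hA, one_mul, (hpres t).measure_preimage
              hA.nullMeasurableSet]
          simp_rw [h4]
          rw [setLIntegral_const]
          ring
        · have h5 : (Function.uncurry fun (m : M) (t : ℝ) =>
                A.indicator (fun _ => (1:ℝ≥0∞)) (τ t m))
              = ((fun p : M × ℝ => τ p.2 p.1) ⁻¹' A).indicator (fun _ => 1) := by
            funext p
            by_cases h : τ p.2 p.1 ∈ A <;> simp [Function.uncurry, Set.indicator, h]
          have h6 : Measurable (Function.uncurry fun (m : M) (t : ℝ) =>
              A.indicator (fun _ => (1:ℝ≥0∞)) (τ t m)) := by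
            rw [h5]
            exact measurable_const.indicator ((hjm.comp measurable_swap) hA)
          exact h6.aemeasurable
      calc ENNReal.ofReal (K : ℝ) * μ (Bad S)
          = ∫⁻ m, volume ({t : ℝ | τ t m ∈ Bad S} ∩ Icc 0 (K : ℝ)) ∂μ := by
            rw [hfub _ (hBadMeas S) _ measurableSet_Icc, Real.volume_Icc]
            simp
        _ ≤ ∫⁻ m, ENNReal.ofReal (4 / lam) *
              volume ({s : ℝ | τ s m ∈ E} ∩ Icc (-(S : ℝ)) ((K : ℝ) + S)) ∂μ :=
            lintegral_mono hpt
        _ = ENNReal.ofReal (4 / lam) * (ENNReal.ofReal ((K : ℝ) + 2 * S) * μ E) := by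
            rw [lintegral_const_mul _ ?m, hfub _ hE _ measurableSet_Icc, Real.volume_Icc]
            · norm_num
              ring_nf
            case m =>
              have : (fun m => volume ({s : ℝ | τ s m ∈ E} ∩ Icc (-(S : ℝ)) ((K : ℝ) + S)))
                  = fun m => ∫⁻ s in Icc (-(S : ℝ)) ((K : ℝ) + S),
                      (fun p : M × ℝ => g (p.2, p.1)) (m, s) := by
                funext m; exact key m _ measurableSet_Icc
              rw [this]
              exact Measurable.lintegral_prod_right' (hgmeas.comp measurable_swap)
    -- now take K → ∞
    have h1 : Tendsto (fun K : ℕ => ((K : ℝ) + 2 * S) / K) atTop (nhds 1) := by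
      have heq : (fun K : ℕ => ((K : ℝ) + 2 * S) / K) =ᶠ[atTop] fun K : ℕ => 1 + 2 * S / K := by
        filter_upwards [eventually_gt_atTop 0] with K hK0
        have : (K : ℝ) ≠ 0 := Nat.cast_ne_zero.2 hK0.ne'
        field_simp
      rw [tendsto_congr' heq]
      have h2 : Tendsto (fun K : ℕ => 2 * (S : ℝ) / K) atTop (nhds 0) :=
        Tendsto.div_atTop tendsto_const_nhds (tendsto_natCast_atTop_atTop (R := ℝ))
      simpa using tendsto_const_nhds.add h2
    have h2 : Tendsto (fun K : ℕ => ENNReal.ofReal (((K : ℝ) + 2 * S) / K)) atTop (nhds 1) := by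
      have := (ENNReal.continuous_ofReal.tendsto 1).comp h1
      simpa [Function.comp_def] using this
    have hlim : Tendsto (fun K : ℕ => ENNReal.ofReal (((K : ℝ) + 2 * S) / K)
        * (ENNReal.ofReal (4 / lam) * μ E)) atTop
        (nhds (ENNReal.ofReal (4 / lam) * μ E)) := by
      have := ENNReal.Tendsto.mul_const (b := ENNReal.ofReal (4 / lam) * μ E) h2
        (Or.inl one_ne_zero)
      simpa using this
    apply ge_of_tendsto hlim
    filter_upwards [eventually_ge_atTop 1] with K hK1
    have hKpos : (0:ℝ) < (K:ℝ) := by exact_mod_cast hK1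
    have hsplit : ENNReal.ofReal ((K:ℝ) + 2 * S)
        = ENNReal.ofReal (K:ℝ) * ENNReal.ofReal (((K:ℝ) + 2 * S) / K) := by
      rw [← ENNReal.ofReal_mul (le_of_lt hKpos)]
      congr 1
      field_simp
    have hK' := hK K
    rw [hsplit] at hK'
    have hK'' : ENNReal.ofReal (K:ℝ) * μ (Bad S) ≤ ENNReal.ofReal (K:ℝ) *
        (ENNReal.ofReal (((K:ℝ) + 2 * S) / K) * (ENNReal.ofReal (4 / lam) * μ E)) := by
      calc ENNReal.ofReal (K:ℝ) * μ (Bad S)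
          ≤ ENNReal.ofReal (4 / lam) *
            (ENNReal.ofReal (K:ℝ) * ENNReal.ofReal (((K:ℝ) + 2 * S) / K) * μ E) := hK'
        _ = ENNReal.ofReal (K:ℝ) *
            (ENNReal.ofReal (((K:ℝ) + 2 * S) / K) * (ENNReal.ofReal (4 / lam) * μ E)) := by ring
    exact (ENNReal.mul_le_mul_iff_right (by simp; omega) (by simp)).1 hK''
  -- conclude: the full bad set is the increasing union of Bad S
  have hunion : {m | ∃ n : ℕ, 1 ≤ n ∧ ENNReal.ofReal (2 * n * lam) <
      volume ({s : ℝ | τ s m ∈ E} ∩ Metric.closedBall 0 n)} = ⋃ S : ℕ, Bad S := by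
    ext m
    simp only [mem_setOf_eq, mem_iUnion, hBad]
    constructor
    · rintro ⟨n, h1, h3⟩; exact ⟨n, n, h1, le_refl n, h3⟩
    · rintro ⟨S, n, h1, _, h3⟩; exact ⟨n, h1, h3⟩
  rw [hunion]
  have hmono : Monotone Bad := by
    intro S1 S2 hS m hm
    obtain ⟨n, h1, h2, h3⟩ := hm
    exact ⟨n, h1, h2.trans hS, h3⟩
  rw [(directed_of_isDirected_le hmono).measure_iUnion]
  exact iSup_le hmain

lemma bdd_intervalIntegrable (g : ℝ → ℝ) (hg : Measurable g) (C : ℝ)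
    (hb : ∀ y, |g y| ≤ C) (a b : ℝ) : IntervalIntegrable g volume a b := by
  rw [intervalIntegrable_iff]
  have : IsFiniteMeasure (volume.restrict (Set.uIoc a b)) := by
    constructor
    rw [Measure.restrict_apply_univ]
    exact measure_Ioc_lt_top
  apply Integrable.mono' (integrable_const C)
  · exact hg.aestronglyMeasurable
  · exact ae_of_all _ fun y => hb y

lemma cesaro (g : ℝ → ℝ) (hg : Measurable g) (C : ℝ) (hb : ∀ y, |g y| ≤ C)
    (h0 : ∀ y, 0 ≤ g y) (hlim : Tendsto g atTop (nhds 0)) :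
    Tendsto (fun n : ℕ => (∫ y in (0:ℝ)..(n:ℝ), g y) / n) atTop (nhds 0) := by
  have hC : 0 ≤ C := le_trans (abs_nonneg _) (hb 0)
  have hint : ∀ a b : ℝ, IntervalIntegrable g volume a b :=
    bdd_intervalIntegrable g hg C hb
  rw [Metric.tendsto_atTop]
  intro η hη
  obtain ⟨Y0, hY0⟩ := (Metric.tendsto_atTop.1 hlim) (η/2) (by positivity)
  set Y : ℝ := max Y0 0 with hY
  have hgle : ∀ y ≥ Y, g y ≤ η / 2 := by
    intro y hy
    have := hY0 y (le_trans (le_max_left _ _) hy)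
    rw [Real.dist_eq, sub_zero] at this
    exact le_of_lt (lt_of_abs_lt this)
  have hYnn : 0 ≤ Y := le_max_right _ _
  refine ⟨⌈2 * C * Y / η⌉₊ + ⌈Y⌉₊ + 1, fun n hn => ?_⟩
  have hn1 : 1 ≤ n := le_trans (by omega) hn
  have hnY : Y ≤ (n : ℝ) := by
    calc Y ≤ (⌈Y⌉₊ : ℝ) := Nat.le_ceil Y
      _ ≤ (n : ℝ) := by exact_mod_cast le_trans (by omega) hn
  have hnpos : (0:ℝ) < n := by exact_mod_cast hn1
  have hnbig : 2 * C * Y / η < (n:ℝ) := by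
    calc 2 * C * Y / η ≤ (⌈2 * C * Y / η⌉₊ : ℝ) := Nat.le_ceil _
      _ < (n : ℝ) := by exact_mod_cast lt_of_lt_of_le (by omega) hn
  -- split the integral
  have hsplit : ∫ y in (0:ℝ)..(n:ℝ), g y
      = (∫ y in (0:ℝ)..Y, g y) + ∫ y in Y..(n:ℝ), g y :=
    (intervalIntegral.integral_add_adjacent_intervals (hint 0 Y) (hint Y n)).symm
  have h1 : ∫ y in (0:ℝ)..Y, g y ≤ C * Y := by
    calc ∫ y in (0:ℝ)..Y, g y ≤ ∫ _ in (0:ℝ)..Y, C :=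
          intervalIntegral.integral_mono_on hYnn (hint 0 Y)
            (intervalIntegrable_const) (fun y _ => le_trans (le_abs_self _) (hb y))
      _ = C * Y := by rw [intervalIntegral.integral_const, smul_eq_mul]; ring
  have h2 : ∫ y in Y..(n:ℝ), g y ≤ η / 2 * n := by
    calc ∫ y in Y..(n:ℝ), g y ≤ ∫ _ in Y..(n:ℝ), (η/2) :=
          intervalIntegral.integral_mono_on hnY (hint Y n)
            (intervalIntegrable_const) (fun y hy => hgle y hy.1)
      _ = ((n:ℝ) - Y) * (η/2) := by rw [intervalIntegral.integral_const, smul_eq_mul]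
      _ ≤ η / 2 * n := by nlinarith
  have hpos : 0 ≤ ∫ y in (0:ℝ)..(n:ℝ), g y :=
    intervalIntegral.integral_nonneg (by positivity) (fun y _ => h0 y)
  rw [Real.dist_eq, sub_zero, abs_of_nonneg (by positivity)]
  rw [div_lt_iff₀ hnpos]
  calc ∫ y in (0:ℝ)..(n:ℝ), g y ≤ C * Y + η / 2 * n := by rw [hsplit]; gcongr
    _ < η / 2 * n + η / 2 * n := by
        have : C * Y < η / 2 * n := by
          rcases eq_or_lt_of_le hC with h | h
          · rw [← h]; simpa using by positivity
          · rcases eq_or_lt_of_le hYnn with h' | h'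
            · rw [← h']; simpa using by positivity
            · rw [div_lt_iff₀ hη] at hnbig
              nlinarith
        linarith
    _ = η * n := by ring

set_option maxHeartbeats 2000000 in
/-- For a jointly measurable, measure-preserving, ergodic flow `(τ_t)` on a probability
space and a bounded measurable `f : [0,∞) × M → ℝ` such that `f(y₂,m) → 0` as
`y₂ → ∞` for a.e. `m`, one has, for a.e. `m`,
`lim_{ε→0⁺} sup_{R≥1} (ε²/R) ∫_{−R/ε}^{R/ε} ∫_0^{1/ε} f(y₂, τ_{y₁} m)² dy₂ dy₁ = 0`. -/
theorem stmt16 {M : Type*} [MeasurableSpace M] (μ : Measure M) [IsProbabilityMeasure μ]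
    (τ : ℝ → M → M)
    (hjm : Measurable fun p : ℝ × M => τ p.1 p.2)
    (hid : ∀ m, τ 0 m = m)
    (hgrp : ∀ s t : ℝ, ∀ m, τ (s + t) m = τ s (τ t m))
    (hpres : ∀ t : ℝ, MeasurePreserving (τ t) μ μ)
    (herg : ∀ A : Set M, MeasurableSet A → (∀ t : ℝ, μ ((τ t ⁻¹' A) ∆ A) = 0) →
      μ A = 0 ∨ μ A = 1)
    (f : ℝ → M → ℝ)
    (hfm : Measurable fun p : ℝ × M => f p.1 p.2)
    (hfb : ∃ C : ℝ, ∀ y₂ : ℝ, ∀ m, |f y₂ m| ≤ C)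
    (hlim : ∀ᵐ m ∂μ, Tendsto (fun y₂ : ℝ => f y₂ m) atTop (nhds 0)) :
    ∀ᵐ m ∂μ,
      Tendsto
        (fun ε : ℝ => ⨆ R : Set.Ici (1 : ℝ),
          (ε ^ 2 / (R : ℝ)) *
            ∫ y₁ in (-((R : ℝ) / ε))..((R : ℝ) / ε),
              ∫ y₂ in (0 : ℝ)..(1 / ε), (f y₂ (τ y₁ m)) ^ 2)
        (nhdsWithin 0 (Set.Ioi 0)) (nhds 0) := by
  classical
  obtain ⟨C, hC⟩ := hfb
  have hMne : Nonempty M := by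
    by_contra h
    rw [not_nonempty_iff] at h
    have h1 : μ Set.univ = 1 := measure_univ
    rw [Set.univ_eq_empty_iff.2 h, measure_empty] at h1
    exact zero_ne_one h1
  have hC0 : 0 ≤ C := le_trans (abs_nonneg _) (hC 0 hMne.some)
  have hτm : ∀ t : ℝ, Measurable (τ t) := fun t =>
    hjm.comp (measurable_const.prodMk measurable_id)
  have horb : ∀ m : M, Measurable fun s : ℝ => τ s m := fun m =>
    hjm.comp (measurable_id.prodMk measurable_const)
  have hsqb : ∀ y m', f y m' ^ 2 ≤ C ^ 2 := by
    intro y m'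
    have h1 := hC y m'
    have h2 := abs_nonneg (f y m')
    nlinarith [sq_abs (f y m')]
  have hfym : ∀ m', Measurable fun y => f y m' ^ 2 := fun m' =>
    ((hfm.comp (measurable_id.prodMk measurable_const)).pow_const 2)
  have hsqint : ∀ m' (a b : ℝ), IntervalIntegrable (fun y => f y m' ^ 2) volume a b := by
    intro m' a b
    exact bdd_intervalIntegrable _ (hfym m') (C ^ 2)
      (fun y => by rw [abs_of_nonneg (sq_nonneg _)]; exact hsqb y m') a b
  -- measurability of m' ↦ ∫₀ᵀ f²
  have hImeas : ∀ T : ℝ, Measurable fun m' => ∫ y in (0:ℝ)..T, f y m' ^ 2 := by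
    intro T
    have hFsm : StronglyMeasurable (fun p : M × ℝ => f p.2 p.1 ^ 2) :=
      ((hfm.comp measurable_swap).pow_const 2).stronglyMeasurable
    have h1 : ∀ (a b : ℝ), Measurable fun m' => ∫ y in Ioc a b, f y m' ^ 2 := by
      intro a b
      exact (MeasureTheory.StronglyMeasurable.integral_prod_right'
        (ν := volume.restrict (Ioc a b)) hFsm).measurable
    have : (fun m' => ∫ y in (0:ℝ)..T, f y m' ^ 2)
        = fun m' => (∫ y in Ioc 0 T, f y m' ^ 2) - ∫ y in Ioc T 0, f y m' ^ 2 := by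
      funext m'
      rfl
    rw [this]
    exact (h1 0 T).sub (h1 T 0)
  -- the Cesàro averages
  have hψlim : ∀ᵐ m' ∂μ, Tendsto
      (fun n : ℕ => (∫ y in (0:ℝ)..(n:ℝ), f y m' ^ 2) / n) atTop (nhds 0) := by
    filter_upwards [hlim] with m' hm'
    apply cesaro _ (hfym m') (C ^ 2)
      (fun y => by rw [abs_of_nonneg (sq_nonneg _)]; exact hsqb y m') (fun y => sq_nonneg _)
    have := hm'.pow 2
    simpa using this
  -- Egorov for each k
  have hex : ∀ k : ℕ, ∃ (E : Set M) (N : ℕ), MeasurableSet E ∧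
      μ E ≤ ENNReal.ofReal ((2⁻¹:ℝ) ^ k * (2⁻¹:ℝ) ^ k) ∧
      ∀ n : ℕ, N ≤ n → ∀ m', m' ∉ E →
        (∫ y in (0:ℝ)..(n:ℝ), f y m' ^ 2) ≤ (2⁻¹:ℝ) ^ k * n := by
    intro k
    have hψsm : ∀ n : ℕ, StronglyMeasurable
        (fun m' => (∫ y in (0:ℝ)..(n:ℝ), f y m' ^ 2) / (n:ℝ)) := fun n =>
      ((hImeas n).div_const _).stronglyMeasurable
    obtain ⟨t, htmeas, htsmall, htunif⟩ :=
      tendstoUniformlyOn_of_ae_tendsto' (μ := μ) hψsm stronglyMeasurable_const hψlim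
        (ε := (2⁻¹:ℝ) ^ k * (2⁻¹:ℝ) ^ k) (by positivity)
    obtain ⟨N, hN⟩ := (Metric.tendstoUniformlyOn_iff.1 htunif ((2⁻¹:ℝ) ^ k)
      (by positivity)).exists_forall_of_atTop
    refine ⟨t, N, htmeas, htsmall, ?_⟩
    intro n hn m' hm'
    have h1 := hN n hn m' hm'
    rw [Real.dist_eq] at h1
    have h2 : |(∫ y in (0:ℝ)..(n:ℝ), f y m' ^ 2) / n| < (2⁻¹:ℝ) ^ k := by
      simpa using h1
    rcases Nat.eq_zero_or_pos n with h | h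
    · subst h
      simp
    · have hn0 : (0:ℝ) < n := by exact_mod_cast h
      calc (∫ y in (0:ℝ)..(n:ℝ), f y m' ^ 2)
          = (∫ y in (0:ℝ)..(n:ℝ), f y m' ^ 2) / n * n := by field_simp
        _ ≤ |(∫ y in (0:ℝ)..(n:ℝ), f y m' ^ 2) / n| * n := by
            have := le_abs_self ((∫ y in (0:ℝ)..(n:ℝ), f y m' ^ 2) / n)
            nlinarith
        _ ≤ (2⁻¹:ℝ) ^ k * n := by nlinarith
  choose Ek Nk hEkmeas hEksmall hEkunif using hex
  -- the bad sets from the maximal inequality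
  set D : ℕ → Set M := fun k => {m | ∃ n : ℕ, 1 ≤ n ∧
      ENNReal.ofReal (2 * n * (2⁻¹:ℝ) ^ k) <
        volume ({s : ℝ | τ s m ∈ Ek k} ∩ Metric.closedBall 0 n)} with hD
  have hDk : ∀ k, μ (D k) ≤ ENNReal.ofReal 4 * ENNReal.ofReal ((2⁻¹:ℝ) ^ k) := by
    intro k
    have h1 := flow_maximal μ τ hjm hgrp hpres (Ek k) (hEkmeas k) ((2⁻¹:ℝ) ^ k)
      (by positivity)
    calc μ (D k) ≤ ENNReal.ofReal (4 / (2⁻¹:ℝ) ^ k) * μ (Ek k) := h1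
      _ ≤ ENNReal.ofReal (4 / (2⁻¹:ℝ) ^ k) *
          ENNReal.ofReal ((2⁻¹:ℝ) ^ k * (2⁻¹:ℝ) ^ k) := mul_le_mul_right (hEksmall k) _
      _ = ENNReal.ofReal (4 / (2⁻¹:ℝ) ^ k * ((2⁻¹:ℝ) ^ k * (2⁻¹:ℝ) ^ k)) := by
          rw [← ENNReal.ofReal_mul (by positivity)]
      _ = ENNReal.ofReal (4 * (2⁻¹:ℝ) ^ k) := by
          congr 1
          field_simp
      _ = ENNReal.ofReal 4 * ENNReal.ofReal ((2⁻¹:ℝ) ^ k) := by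
          rw [← ENNReal.ofReal_mul (by norm_num)]
  -- Borel–Cantelli
  have hBC : ∀ᵐ m ∂μ, ∀ᶠ k in atTop, m ∉ D k := by
    apply MeasureTheory.ae_eventually_notMem
    have h1 : ∑' k, μ (D k) ≤ ∑' k : ℕ, ENNReal.ofReal 4 * ENNReal.ofReal ((2⁻¹:ℝ) ^ k) :=
      ENNReal.tsum_le_tsum hDk
    have h2 : ∑' k : ℕ, ENNReal.ofReal 4 * ENNReal.ofReal ((2⁻¹:ℝ) ^ k) ≠ ⊤ := by
      rw [ENNReal.tsum_mul_left]
      have h3 : ∀ k : ℕ, ENNReal.ofReal ((2⁻¹:ℝ) ^ k) = (2⁻¹ : ℝ≥0∞) ^ k := by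
        intro k
        rw [ENNReal.ofReal_pow (by norm_num)]
        congr 1
        rw [ENNReal.ofReal_inv_of_pos (by norm_num)]
        norm_num
      simp_rw [h3]
      rw [ENNReal.tsum_geometric, ENNReal.one_sub_inv_two]
      exact ENNReal.mul_ne_top ENNReal.ofReal_ne_top (by simp)
    exact ne_top_of_le_ne_top h2 h1
  -- the main argument
  filter_upwards [hBC] with m hm
  obtain ⟨K, hK⟩ := eventually_atTop.1 hm
  rw [Metric.tendsto_nhdsWithin_nhds]
  intro η hη
  have htend : Tendsto (fun k : ℕ => (4 + 4 * C ^ 2) * (2⁻¹:ℝ) ^ k) atTop (nhds 0) := by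
    have h1 := tendsto_pow_atTop_nhds_zero_of_lt_one (by norm_num : (0:ℝ) ≤ 2⁻¹)
      (by norm_num : (2⁻¹:ℝ) < 1)
    simpa using h1.const_mul (4 + 4 * C ^ 2)
  obtain ⟨k, hkk, hkK⟩ := ((htend.eventually (gt_mem_nhds hη)).and (eventually_ge_atTop K)).exists
  have hmD : m ∉ D k := hK k hkK
  set dl : ℝ := (2⁻¹:ℝ) ^ k with hdl
  have hδ : (0:ℝ) < dl := by positivity
  set B : ℕ := max (Nk k) 1 with hB
  have hB1 : 1 ≤ B := le_max_right _ _
  have hBpos : (0:ℝ) < B := by exact_mod_cast Nat.lt_of_lt_of_le Nat.zero_lt_one hB1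
  refine ⟨1 / B, by positivity, ?_⟩
  intro ε hε hdist
  have hε0 : 0 < ε := hε
  rw [Real.dist_eq, sub_zero, abs_of_pos hε0] at hdist
  have hTB : (B:ℝ) ≤ 1 / ε := by
    rw [lt_div_iff₀ hBpos] at hdist
    rw [le_div_iff₀ hε0]
    nlinarith
  have hT1 : (1:ℝ) ≤ 1 / ε := le_trans (by exact_mod_cast hB1) hTB
  have hT0 : (0:ℝ) ≤ 1 / ε := by linarith
  have h1B : 1 / (B:ℝ) ≤ 1 := by
    rw [div_le_one hBpos]
    exact_mod_cast hB1
  have hεlt1 : ε < 1 := lt_of_lt_of_le hdist h1B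
  -- uniform bound on the inner integral
  have hsup : ∀ m', (∫ y in (0:ℝ)..(1/ε), f y m' ^ 2) ≤ C ^ 2 * (1/ε) := by
    intro m'
    calc (∫ y in (0:ℝ)..(1/ε), f y m' ^ 2) ≤ ∫ _ in (0:ℝ)..(1/ε), C ^ 2 :=
        intervalIntegral.integral_mono_on hT0 (hsqint m' 0 (1/ε)) intervalIntegrable_const
          (fun y _ => hsqb y m')
      _ = C ^ 2 * (1/ε) := by rw [intervalIntegral.integral_const, smul_eq_mul]; ring
  have hinn0 : ∀ m', 0 ≤ ∫ y in (0:ℝ)..(1/ε), f y m' ^ 2 := fun m' =>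
    intervalIntegral.integral_nonneg hT0 (fun y _ => sq_nonneg _)
  -- pointwise inner bound
  have hinner : ∀ y₁ : ℝ, (∫ y in (0:ℝ)..(1/ε), f y (τ y₁ m) ^ 2)
      ≤ 2 * dl * (1/ε) + (C ^ 2 * (1/ε)) *
        Set.indicator (Ek k) (fun _ => (1:ℝ)) (τ y₁ m) := by
    intro y₁
    by_cases hmem : τ y₁ m ∈ Ek k
    · rw [Set.indicator_of_mem hmem]
      have h1 := hsup (τ y₁ m)
      nlinarith
    · rw [Set.indicator_of_notMem hmem]
      set n : ℕ := ⌈(1/ε)⌉₊ with hn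
      have hTn : (1/ε) ≤ (n:ℝ) := Nat.le_ceil _
      have hnT1 : (n:ℝ) ≤ 1/ε + 1 := le_of_lt (Nat.ceil_lt_add_one hT0)
      have hNn : Nk k ≤ n := by
        have h2 : (Nk k : ℝ) ≤ (n:ℝ) := by
          calc (Nk k : ℝ) ≤ (B:ℝ) := by exact_mod_cast le_max_left (Nk k) 1
            _ ≤ 1/ε := hTB
            _ ≤ n := hTn
        exact_mod_cast h2
      have h3 : (∫ y in (0:ℝ)..(1/ε), f y (τ y₁ m) ^ 2)
          ≤ ∫ y in (0:ℝ)..(n:ℝ), f y (τ y₁ m) ^ 2 :=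
        intervalIntegral.integral_mono_interval le_rfl hT0 hTn
          (ae_of_all _ (fun y => sq_nonneg _)) (hsqint (τ y₁ m) 0 n)
      have h4 := hEkunif k n hNn (τ y₁ m) hmem
      calc (∫ y in (0:ℝ)..(1/ε), f y (τ y₁ m) ^ 2) ≤ dl * n := le_trans h3 h4
        _ ≤ 2 * dl * (1/ε) + (C ^ 2 * (1/ε)) * 0 := by nlinarith
  -- the W set
  set W : Set ℝ := {s | τ s m ∈ Ek k} with hW
  have hWmeas : MeasurableSet W := (horb m) (hEkmeas k)
  have hmD' : ∀ n : ℕ, 1 ≤ n →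
      volume (W ∩ Metric.closedBall 0 n) ≤ ENNReal.ofReal (2 * n * dl) := by
    intro n hn
    by_contra hcon
    exact hmD ⟨n, hn, lt_of_not_ge hcon⟩
  -- per-term bound
  have termb : ∀ R : Set.Ici (1:ℝ),
      (ε ^ 2 / (R : ℝ)) * ∫ y₁ in (-((R : ℝ) / ε))..((R : ℝ) / ε),
          ∫ y₂ in (0:ℝ)..(1/ε), f y₂ (τ y₁ m) ^ 2
        ≤ (4 + 4 * C ^ 2) * dl := by
    intro R
    have hR1 : (1:ℝ) ≤ (R:ℝ) := R.2
    have hRpos : (0:ℝ) < (R:ℝ) := lt_of_lt_of_le one_pos hR1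
    have hT'1 : (1:ℝ) ≤ (R:ℝ)/ε := by
      rw [le_div_iff₀ hε0]
      nlinarith [hεlt1]
    have hT'0 : (0:ℝ) ≤ (R:ℝ)/ε := by linarith
    have hmm : -((R:ℝ)/ε) ≤ (R:ℝ)/ε := by linarith
    -- integrabilities
    have hIout : IntervalIntegrable (fun y₁ => ∫ y in (0:ℝ)..(1/ε), f y (τ y₁ m) ^ 2)
        volume (-((R:ℝ)/ε)) ((R:ℝ)/ε) := by
      apply bdd_intervalIntegrable _ ((hImeas (1/ε)).comp (horb m)) (C ^ 2 * (1/ε))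
      intro y₁
      show |∫ y in (0:ℝ)..(1/ε), f y (τ y₁ m) ^ 2| ≤ C ^ 2 * (1/ε)
      rw [abs_of_nonneg (hinn0 (τ y₁ m))]
      exact hsup (τ y₁ m)
    have hmeasind : Measurable fun y₁ : ℝ =>
        Set.indicator (Ek k) (fun _ => (1:ℝ)) (τ y₁ m) :=
      (measurable_const.indicator (hEkmeas k)).comp (horb m)
    have hindval : ∀ y₁ : ℝ, Set.indicator (Ek k) (fun _ => (1:ℝ)) (τ y₁ m) = 0 ∨
        Set.indicator (Ek k) (fun _ => (1:ℝ)) (τ y₁ m) = 1 := by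
      intro y₁
      by_cases h : τ y₁ m ∈ Ek k
      · right; rw [Set.indicator_of_mem h]
      · left; rw [Set.indicator_of_notMem h]
    have hIind2 : IntervalIntegrable (fun y₁ => (C ^ 2 * (1/ε)) *
        Set.indicator (Ek k) (fun _ => (1:ℝ)) (τ y₁ m)) volume (-((R:ℝ)/ε)) ((R:ℝ)/ε) := by
      apply bdd_intervalIntegrable _ (hmeasind.const_mul _) (C ^ 2 * (1/ε))
      intro y₁
      rcases hindval y₁ with h | h <;> rw [h]
      · simp [abs_of_nonneg]; positivity
      · rw [mul_one, abs_of_nonneg (by positivity)]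
    have hIind : IntervalIntegrable (fun y₁ => 2 * dl * (1/ε) + (C ^ 2 * (1/ε)) *
        Set.indicator (Ek k) (fun _ => (1:ℝ)) (τ y₁ m)) volume (-((R:ℝ)/ε)) ((R:ℝ)/ε) :=
      intervalIntegrable_const.add hIind2
    -- outer comparison
    have houter : (∫ y₁ in (-((R:ℝ)/ε))..((R:ℝ)/ε), ∫ y₂ in (0:ℝ)..(1/ε), f y₂ (τ y₁ m) ^ 2)
        ≤ ∫ y₁ in (-((R:ℝ)/ε))..((R:ℝ)/ε), (2 * dl * (1/ε) + (C ^ 2 * (1/ε)) *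
            Set.indicator (Ek k) (fun _ => (1:ℝ)) (τ y₁ m)) :=
      intervalIntegral.integral_mono_on hmm hIout hIind (fun y₁ _ => hinner y₁)
    -- compute the RHS
    have hsplit : (∫ y₁ in (-((R:ℝ)/ε))..((R:ℝ)/ε), (2 * dl * (1/ε) + (C ^ 2 * (1/ε)) *
            Set.indicator (Ek k) (fun _ => (1:ℝ)) (τ y₁ m)))
        = (2 * ((R:ℝ)/ε)) * (2 * dl * (1/ε)) + (C ^ 2 * (1/ε)) *
            ∫ y₁ in (-((R:ℝ)/ε))..((R:ℝ)/ε),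
              Set.indicator (Ek k) (fun _ => (1:ℝ)) (τ y₁ m) := by
      rw [intervalIntegral.integral_add intervalIntegrable_const hIind2,
        intervalIntegral.integral_const, intervalIntegral.integral_const_mul, smul_eq_mul]
      ring
    -- indicator integral equals measure
    have hLeq : (∫ y₁ in (-((R:ℝ)/ε))..((R:ℝ)/ε),
          Set.indicator (Ek k) (fun _ => (1:ℝ)) (τ y₁ m))
        = (volume (W ∩ Ioc (-((R:ℝ)/ε)) ((R:ℝ)/ε))).toReal := by
      rw [intervalIntegral.integral_of_le hmm]
      have hch : (fun y₁ : ℝ => Set.indicator (Ek k) (fun _ => (1:ℝ)) (τ y₁ m))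
          = W.indicator (fun _ => (1:ℝ)) := by
        funext s
        by_cases h : τ s m ∈ Ek k <;> simp [hW, Set.indicator, h]
      rw [hch]
      calc ∫ y₁ in Ioc (-((R:ℝ)/ε)) ((R:ℝ)/ε), W.indicator (fun _ => (1:ℝ)) y₁
          = ((volume.restrict (Ioc (-((R:ℝ)/ε)) ((R:ℝ)/ε))) W).toReal :=
            MeasureTheory.integral_indicator_one hWmeas
        _ = (volume (W ∩ Ioc (-((R:ℝ)/ε)) ((R:ℝ)/ε))).toReal := by
            rw [Measure.restrict_apply hWmeas]
    -- bound the measure using hmD'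
    have hLle : (volume (W ∩ Ioc (-((R:ℝ)/ε)) ((R:ℝ)/ε))).toReal ≤ 4 * ((R:ℝ)/ε) * dl := by
      apply ENNReal.toReal_le_of_le_ofReal (by positivity)
      set n' : ℕ := ⌈(R:ℝ)/ε⌉₊ with hn'
      have hn'1 : 1 ≤ n' := by
        rw [hn', Nat.one_le_ceil_iff]
        linarith
      have hTn' : (R:ℝ)/ε ≤ (n':ℝ) := Nat.le_ceil _
      have hn'T : (n':ℝ) ≤ (R:ℝ)/ε + 1 := le_of_lt (Nat.ceil_lt_add_one hT'0)
      calc volume (W ∩ Ioc (-((R:ℝ)/ε)) ((R:ℝ)/ε))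
          ≤ volume (W ∩ Metric.closedBall 0 n') := by
            apply measure_mono
            intro x hx
            refine ⟨hx.1, ?_⟩
            rw [Metric.mem_closedBall, Real.dist_eq, sub_zero, abs_le]
            exact ⟨by linarith [hx.2.1], by linarith [hx.2.2]⟩
        _ ≤ ENNReal.ofReal (2 * n' * dl) := hmD' n' hn'1
        _ ≤ ENNReal.ofReal (4 * ((R:ℝ)/ε) * dl) :=
            ENNReal.ofReal_le_ofReal (by nlinarith)
    -- put everything together
    have hstep : (ε ^ 2 / (R : ℝ)) * ∫ y₁ in (-((R:ℝ)/ε))..((R:ℝ)/ε),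
          ∫ y₂ in (0:ℝ)..(1/ε), f y₂ (τ y₁ m) ^ 2
        ≤ (ε ^ 2 / (R : ℝ)) * ((2 * ((R:ℝ)/ε)) * (2 * dl * (1/ε)) +
            (C ^ 2 * (1/ε)) * (4 * ((R:ℝ)/ε) * dl)) := by
      apply mul_le_mul_of_nonneg_left _ (by positivity)
      calc (∫ y₁ in (-((R:ℝ)/ε))..((R:ℝ)/ε), ∫ y₂ in (0:ℝ)..(1/ε), f y₂ (τ y₁ m) ^ 2)
          ≤ _ := houter
        _ = (2 * ((R:ℝ)/ε)) * (2 * dl * (1/ε)) + (C ^ 2 * (1/ε)) *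
            ((volume (W ∩ Ioc (-((R:ℝ)/ε)) ((R:ℝ)/ε))).toReal) := by rw [hsplit, hLeq]
        _ ≤ (2 * ((R:ℝ)/ε)) * (2 * dl * (1/ε)) + (C ^ 2 * (1/ε)) * (4 * ((R:ℝ)/ε) * dl) := by
            have := mul_le_mul_of_nonneg_left hLle (by positivity : (0:ℝ) ≤ C ^ 2 * (1/ε))
            linarith
    have harit : (ε ^ 2 / (R : ℝ)) * ((2 * ((R:ℝ)/ε)) * (2 * dl * (1/ε)) +
        (C ^ 2 * (1/ε)) * (4 * ((R:ℝ)/ε) * dl)) = (4 + 4 * C ^ 2) * dl := by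
      field_simp
      ring
    rw [harit] at hstep
    exact hstep
  -- nonnegativity of each term
  have termnn : ∀ R : Set.Ici (1:ℝ),
      0 ≤ (ε ^ 2 / (R : ℝ)) * ∫ y₁ in (-((R : ℝ) / ε))..((R : ℝ) / ε),
          ∫ y₂ in (0:ℝ)..(1/ε), f y₂ (τ y₁ m) ^ 2 := by
    intro R
    have hR1 : (1:ℝ) ≤ (R:ℝ) := R.2
    have hRpos : (0:ℝ) < (R:ℝ) := lt_of_lt_of_le one_pos hR1
    have hT'1 : (1:ℝ) ≤ (R:ℝ)/ε := by
      rw [le_div_iff₀ hε0]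
      nlinarith [hεlt1]
    apply mul_nonneg (by positivity)
    apply intervalIntegral.integral_nonneg (by linarith)
    intro y₁ _
    exact hinn0 (τ y₁ m)
  rw [Real.dist_eq, sub_zero, abs_of_nonneg (Real.iSup_nonneg termnn)]
  calc (⨆ R : Set.Ici (1:ℝ), (ε ^ 2 / (R : ℝ)) * ∫ y₁ in (-((R : ℝ) / ε))..((R : ℝ) / ε),
        ∫ y₂ in (0:ℝ)..(1/ε), f y₂ (τ y₁ m) ^ 2)
      ≤ (4 + 4 * C ^ 2) * dl := Real.iSup_le termb (by positivity)
    _ < η := hkk
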